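/- Let f : ℝ → ℝ be twice continuously differentiable with |f''(x)| ≤ M for all x. Then for any finite list of nonnegative reals a₁, …, aₙ, we have |f(a₁ + ⋯ + aₙ) − (f(a₁) + ⋯ + f(aₙ)) + (n−1)·f(0)| ≤ 2·M·∑_{1 ≤ i < j ≤ n} aᵢ·aⱼ. -/

import Mathlib

open Finset

lemma mvt_univ (g g' : ℝ → ℝ) (h : ∀ x, HasDerivAt g (g' x) x) (C : ℝ)
    (hC : ∀ x, |g' x| ≤ C) (x y : ℝ) : |g y - g x| ≤ C * |y - x| := by
  have := Convex.norm_image_sub_le_of_norm_hasDerivWithin_le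
    (f := g) (f' := g') (s := Set.univ)
    (fun z _ => (h z).hasDerivWithinAt) (fun z _ => by simpa [Real.norm_eq_abs] using hC z)
    convex_univ (Set.mem_univ x) (Set.mem_univ y)
  simpa [Real.norm_eq_abs] using this

lemma key (f : ℝ → ℝ) (M : ℝ) (hf : ContDiff ℝ 2 f)
    (hM : ∀ x, |deriv (deriv f) x| ≤ M) (x y : ℝ) (hx : 0 ≤ x) (hy : 0 ≤ y) :
    |f (x + y) - f x - f y + f 0| ≤ M * (x * y) := by
  have hd1 : Differentiable ℝ f := hf.differentiable (by norm_num)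
  have hcd : ContDiff ℝ 1 (deriv f) := by
    have h2 : ContDiff ℝ ((1:ℕ) + 1) f := by exact_mod_cast hf
    exact (contDiff_succ_iff_deriv.mp h2).2.2
  have hd2 : Differentiable ℝ (deriv f) := hcd.differentiable (by norm_num)
  have lip : ∀ u v : ℝ, |deriv f u - deriv f v| ≤ M * |u - v| := fun u v =>
    mvt_univ (deriv f) (deriv (deriv f)) (fun z => (hd2 z).hasDerivAt) M hM v u
  set g : ℝ → ℝ := fun t => f (t + y) - f t with hg
  have hgd : ∀ t, HasDerivAt g (deriv f (t + y) - deriv f t) t := by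
    intro t
    have h1 : HasDerivAt (fun t => f (t + y)) (deriv f (t + y)) t := by
      have := ((hd1 (t + y)).hasDerivAt).comp t ((hasDerivAt_id t).add_const y)
      simpa [Function.comp_def] using this
    exact h1.sub (hd1 t).hasDerivAt
  have hb : ∀ t, |deriv f (t + y) - deriv f t| ≤ M * y := by
    intro t
    have := lip (t + y) t
    simpa [abs_of_nonneg hy] using this
  have := mvt_univ g _ hgd (M * y) hb 0 x
  have hgx : g x - g 0 = f (x + y) - f x - f y + f 0 := by simp [hg]; ring
  rw [hgx] at this
  calc |f (x + y) - f x - f y + f 0| ≤ M * y * |x - 0| := this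
    _ = M * (x * y) := by rw [abs_of_nonneg (by simpa using hx)]; ring

lemma pair_sum (n : ℕ) (a : Fin n → ℝ) :
    2 * ∑ p ∈ Finset.univ.filter (fun p : Fin n × Fin n => p.1 < p.2), a p.1 * a p.2
      = (∑ i, a i) ^ 2 - ∑ i, (a i) ^ 2 := by
  have hswap : ∑ p ∈ Finset.univ.filter (fun p : Fin n × Fin n => p.1 < p.2), a p.1 * a p.2
      = ∑ p ∈ Finset.univ.filter (fun p : Fin n × Fin n => p.2 < p.1), a p.1 * a p.2 := by
    apply Finset.sum_nbij' (fun p => (p.2, p.1)) (fun p => (p.2, p.1)) <;> simp [mul_comm]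
  have total : (∑ i, a i) ^ 2 = ∑ p : Fin n × Fin n, a p.1 * a p.2 := by
    rw [sq, Finset.sum_mul_sum, Fintype.sum_prod_type]
  have hsplit := Finset.sum_filter_add_sum_filter_not Finset.univ
    (fun p : Fin n × Fin n => p.1 < p.2) (fun p => a p.1 * a p.2)
  have hnot : Finset.univ.filter (fun p : Fin n × Fin n => ¬ p.1 < p.2)
      = Finset.univ.filter (fun p : Fin n × Fin n => p.2 < p.1)
        ∪ Finset.univ.filter (fun p : Fin n × Fin n => p.1 = p.2) := by
    ext p
    simp only [Finset.mem_filter, Finset.mem_union, Finset.mem_univ, true_and, not_lt]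
    constructor
    · intro h
      rcases lt_or_eq_of_le h with h | h
      · exact Or.inl h
      · exact Or.inr h.symm
    · rintro (h | h)
      · exact h.le
      · exact h.ge
  have hdisj : Disjoint (Finset.univ.filter (fun p : Fin n × Fin n => p.2 < p.1))
      (Finset.univ.filter (fun p : Fin n × Fin n => p.1 = p.2)) := by
    rw [Finset.disjoint_filter]
    intro p _ h h2
    exact absurd h2 (ne_of_gt h)
  have hdiag : ∑ p ∈ Finset.univ.filter (fun p : Fin n × Fin n => p.1 = p.2), a p.1 * a p.2
      = ∑ i, (a i) ^ 2 := by
    rw [eq_comm]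
    apply Finset.sum_nbij' (fun i => (i, i)) (fun p => p.1)
    all_goals simp [sq]
  rw [hnot, Finset.sum_union hdisj, hdiag, ← hswap] at hsplit
  rw [total, ← hsplit]
  ring

lemma aux (f : ℝ → ℝ) (M : ℝ) (hM0 : 0 ≤ M)
    (hkey : ∀ x y : ℝ, 0 ≤ x → 0 ≤ y → |f (x + y) - f x - f y + f 0| ≤ M * (x * y)) :
    ∀ n (a : Fin n → ℝ), (∀ i, 0 ≤ a i) →
      |f (∑ i, a i) - (∑ i, f (a i)) + ((n : ℝ) - 1) * f 0| ≤
        M * ((∑ i, a i) ^ 2 - ∑ i, (a i) ^ 2) := by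
  intro n
  induction n with
  | zero =>
    intro a _
    simp only [Finset.univ_eq_empty, Finset.sum_empty, Nat.cast_zero]
    have h : f 0 - 0 + ((0 : ℝ) - 1) * f 0 = 0 := by ring
    rw [h]
    simp
  | succ n ih =>
    intro a ha
    set b := a 0 with hb
    set S := ∑ i : Fin n, a i.succ with hS
    have hS0 : 0 ≤ S := Finset.sum_nonneg fun i _ => ha i.succ
    have hQ := ih (fun i => a i.succ) (fun i => ha i.succ)
    have hk := hkey b S (ha 0) hS0
    rw [Fin.sum_univ_succ (f := a), Fin.sum_univ_succ (f := fun i => f (a i)),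
      Fin.sum_univ_succ (f := fun i => (a i) ^ 2)]
    push_cast
    have hdecomp : f (b + S) - (f b + ∑ i : Fin n, f (a i.succ)) + ((n : ℝ) + 1 - 1) * f 0
        = (f (b + S) - f b - f S + f 0) + (f S - (∑ i : Fin n, f (a i.succ)) + ((n : ℝ) - 1) * f 0) := by
      ring
    rw [hdecomp]
    calc |(f (b + S) - f b - f S + f 0) + (f S - (∑ i : Fin n, f (a i.succ)) + ((n : ℝ) - 1) * f 0)|
        ≤ |f (b + S) - f b - f S + f 0| + |f S - (∑ i : Fin n, f (a i.succ)) + ((n : ℝ) - 1) * f 0| :=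
          abs_add_le _ _
      _ ≤ M * (b * S) + M * (S ^ 2 - ∑ i : Fin n, (a i.succ) ^ 2) := add_le_add hk hQ
      _ ≤ M * ((b + S) ^ 2 - (b ^ 2 + ∑ i : Fin n, (a i.succ) ^ 2)) := by nlinarith [mul_nonneg (mul_nonneg hM0 (ha 0)) hS0]

theorem stmt_1 (f : ℝ → ℝ) (M : ℝ) (hf : ContDiff ℝ 2 f)
    (hM : ∀ x, |deriv (deriv f) x| ≤ M)
    (n : ℕ) (a : Fin n → ℝ) (ha : ∀ i, 0 ≤ a i) :
    |f (∑ i, a i) - (∑ i, f (a i)) + ((n : ℝ) - 1) * f 0| ≤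
      2 * M * ∑ p ∈ Finset.univ.filter (fun p : Fin n × Fin n => p.1 < p.2),
        a p.1 * a p.2 := by
  have hM0 : 0 ≤ M := le_trans (abs_nonneg _) (hM 0)
  have h := aux f M hM0 (fun x y hx hy => key f M hf hM x y hx hy) n a ha
  have hps := pair_sum n a
  calc |f (∑ i, a i) - (∑ i, f (a i)) + ((n : ℝ) - 1) * f 0|
      ≤ M * ((∑ i, a i) ^ 2 - ∑ i, (a i) ^ 2) := h
    _ = 2 * M * ∑ p ∈ Finset.univ.filter (fun p : Fin n × Fin n => p.1 < p.2),
        a p.1 * a p.2 := by rw [← hps]; ring
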